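/- Let n ≥ 3 be odd and S = {a, a^{-1}, a^2 b, b} ⊆ D_{2n}. Then the Cayley graph Γ = Cay(D_{2n}, S) is connected, and with H = ⟨ab⟩, the partition B = {H a^i : 0 ≤ i ≤ n-1} of the vertex set satisfies: Γ is isomorphic to the lexicographic product Γ_B[2K_1], where the quotient graph Γ_B is a cycle of length n. -/

import Mathlib

open DihedralGroup

/-- The Cayley graph of `D_{2n}` with connection set `S` (for symmetric `S` with
`1 ∉ S` this has `x ~ y` iff `y * x⁻¹ ∈ S`). -/
def cayleyGraph (n : ℕ) (S : Set (DihedralGroup n)) : SimpleGraph (DihedralGroup n) :=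
  SimpleGraph.fromRel (fun x y => y * x⁻¹ ∈ S)

/-- `S = {a, a⁻¹, a²b, b}`, where `a = r 1` and `b = sr 0`. -/
def stdS (n : ℕ) : Set (DihedralGroup n) :=
  {DihedralGroup.r 1, (DihedralGroup.r 1)⁻¹,
    DihedralGroup.r 1 ^ 2 * DihedralGroup.sr 0, DihedralGroup.sr 0}

/-- The block `H aⁱ = {aⁱ, ab·aⁱ}` where `H = ⟨ab⟩`. -/
def block (n : ℕ) (i : ZMod n) : Set (DihedralGroup n) :=
  {DihedralGroup.r i, DihedralGroup.r 1 * DihedralGroup.sr 0 * DihedralGroup.r i}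

/-- The quotient graph of `Γ = Cay(D_{2n}, S)` with respect to the partition
`B = {H aⁱ : i}`, with blocks indexed by `i ∈ ZMod n`. -/
def quotientGraph (n : ℕ) : SimpleGraph (ZMod n) :=
  SimpleGraph.fromRel (fun i j => ∃ x ∈ block n i, ∃ y ∈ block n j, (cayleyGraph n (stdS n)).Adj x y)



section
variable {n : ℕ}

@[simp] lemma inv_r (i : ZMod n) : (r i : DihedralGroup n)⁻¹ = r (-i) := rfl
@[simp] lemma inv_sr (i : ZMod n) : (sr i : DihedralGroup n)⁻¹ = sr i := rfl

lemma zmod_one_ne_zero (hn : 3 ≤ n) : (1 : ZMod n) ≠ 0 := by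
  intro h
  have h1 : ((1:ℕ) : ZMod n) = 0 := by exact_mod_cast h
  rw [ZMod.natCast_eq_zero_iff] at h1
  have := Nat.le_of_dvd one_pos h1
  omega

lemma zmod_two_ne_zero (hn : 3 ≤ n) : (2 : ZMod n) ≠ 0 := by
  intro h
  have h1 : ((2:ℕ) : ZMod n) = 0 := by exact_mod_cast h
  rw [ZMod.natCast_eq_zero_iff] at h1
  have := Nat.le_of_dvd two_pos h1
  omega

lemma mem_stdS (z : DihedralGroup n) : z ∈ stdS n ↔
    z = r 1 ∨ z = r (-1) ∨ z = sr (-2) ∨ z = sr 0 := by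
  have h2 : (r 1 : DihedralGroup n) ^ 2 * sr 0 = sr (-2) := by
    rw [pow_two, r_mul_r, r_mul_sr]
    norm_num
  simp [stdS, Set.mem_insert_iff, h2]

lemma cay_adj {x y : DihedralGroup n} :
    (cayleyGraph n (stdS n)).Adj x y ↔ x ≠ y ∧ y * x⁻¹ ∈ stdS n := by
  have hsym : ∀ z : DihedralGroup n, z ∈ stdS n → z⁻¹ ∈ stdS n := by
    intro z hz
    rw [mem_stdS] at hz ⊢
    rcases hz with h | h | h | h <;> subst h <;> simp
  rw [cayleyGraph, SimpleGraph.fromRel_adj]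
  constructor
  · rintro ⟨hne, h | h⟩
    · exact ⟨hne, h⟩
    · refine ⟨hne, ?_⟩
      have := hsym _ h
      simpa using this
  · rintro ⟨hne, h⟩
    exact ⟨hne, Or.inl h⟩

lemma adj_rr (hn : 3 ≤ n) {i j : ZMod n} :
    (cayleyGraph n (stdS n)).Adj (r i) (r j) ↔ i - j = 1 ∨ j - i = 1 := by
  rw [cay_adj, mem_stdS]
  simp only [_root_.inv_r, r_mul_r, r.injEq, sr.injEq, reduceCtorEq, or_false, ne_eq]
  constructor
  · rintro ⟨hne, h | h⟩
    · right; rw [← h]; ring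
    · left; rw [eq_neg_iff_add_eq_zero] at h; linear_combination -h
  · rintro (h | h)
    · refine ⟨?_, Or.inr ?_⟩
      · intro he; rw [he, sub_self] at h
        exact zmod_one_ne_zero hn h.symm
      · rw [eq_neg_iff_add_eq_zero]; linear_combination -h
    · refine ⟨?_, Or.inl ?_⟩
      · intro he; rw [he, sub_self] at h
        exact zmod_one_ne_zero hn h.symm
      · linear_combination h

lemma adj_srsr (hn : 3 ≤ n) {i j : ZMod n} :
    (cayleyGraph n (stdS n)).Adj (sr i) (sr j) ↔ i - j = 1 ∨ j - i = 1 := by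
  rw [cay_adj, mem_stdS]
  simp only [_root_.inv_sr, sr_mul_sr, r.injEq, sr.injEq, reduceCtorEq, or_false, ne_eq]
  constructor
  · rintro ⟨hne, h | h⟩
    · left; exact h
    · right; rw [eq_neg_iff_add_eq_zero] at h; linear_combination -h
  · rintro (h | h)
    · refine ⟨?_, Or.inl h⟩
      intro he; rw [he, sub_self] at h
      exact zmod_one_ne_zero hn h.symm
    · refine ⟨?_, Or.inr ?_⟩
      · intro he; rw [he, sub_self] at h
        exact zmod_one_ne_zero hn h.symm
      · rw [eq_neg_iff_add_eq_zero]; linear_combination -h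

lemma adj_rsr {i j : ZMod n} :
    (cayleyGraph n (stdS n)).Adj (r i) (sr j) ↔ i - (j+1) = 1 ∨ (j+1) - i = 1 := by
  rw [cay_adj, mem_stdS]
  simp only [_root_.inv_r, sr_mul_r, r.injEq, sr.injEq, reduceCtorEq, false_or, ne_eq,
    not_false_eq_true, true_and]
  constructor
  · rintro (h | h)
    · left; rw [eq_neg_iff_add_eq_zero] at h; linear_combination -h
    · right; rw [add_neg_eq_zero] at h; rw [h]; ring
  · rintro (h | h)
    · left; rw [eq_neg_iff_add_eq_zero]; linear_combination -h
    · right; rw [add_neg_eq_zero]; linear_combination h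

lemma adj_srr {i j : ZMod n} :
    (cayleyGraph n (stdS n)).Adj (sr j) (r i) ↔ i - (j+1) = 1 ∨ (j+1) - i = 1 := by
  rw [(cayleyGraph n (stdS n)).adj_comm, adj_rsr]

end
section
variable {n : ℕ}

lemma block_eq (i : ZMod n) : block n i = {r i, sr (i - 1)} := by
  have : (r 1 : DihedralGroup n) * sr 0 * r i = sr (i - 1) := by
    rw [r_mul_sr, sr_mul_r]
    ring_nf
  rw [block, this]

lemma rel_imp (hn : 3 ≤ n) {i j : ZMod n}
    (h : ∃ x ∈ block n i, ∃ y ∈ block n j, (cayleyGraph n (stdS n)).Adj x y) :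
    i - j = 1 ∨ j - i = 1 := by
  obtain ⟨x, hx, y, hy, hadj⟩ := h
  rw [block_eq] at hx hy
  simp only [Set.mem_insert_iff, Set.mem_singleton_iff] at hx hy
  have e1 : (j - 1) + 1 = j := by ring
  have e2 : (i - 1) + 1 = i := by ring
  rcases hx with rfl | rfl <;> rcases hy with rfl | rfl
  · exact (adj_rr hn).mp hadj
  · rw [adj_rsr, e1] at hadj; exact hadj
  · rw [adj_srr, e2] at hadj; exact hadj.symm
  · have := (adj_srsr hn).mp hadj
    rcases this with h | h
    · left; linear_combination h
    · right; linear_combination h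

lemma quot_adj (hn : 3 ≤ n) {i j : ZMod n} :
    (quotientGraph n).Adj i j ↔ i - j = 1 ∨ j - i = 1 := by
  rw [quotientGraph, SimpleGraph.fromRel_adj]
  constructor
  · rintro ⟨hne, h | h⟩
    · exact rel_imp hn h
    · exact (rel_imp hn h).symm
  · rintro (h | h)
    · refine ⟨?_, Or.inr ?_⟩
      · intro he; rw [he, sub_self] at h; exact zmod_one_ne_zero hn h.symm
      · exact ⟨r j, by simp [block_eq], r i, by simp [block_eq], (adj_rr hn).mpr (Or.inr h)⟩
    · refine ⟨?_, Or.inl ?_⟩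
      · intro he; rw [he, sub_self] at h; exact zmod_one_ne_zero hn h.symm
      · exact ⟨r i, by simp [block_eq], r j, by simp [block_eq], (adj_rr hn).mpr (Or.inr h)⟩

lemma reach_r (hn : 3 ≤ n) (k : ℕ) :
    (cayleyGraph n (stdS n)).Reachable (r 0) (r (k : ZMod n)) := by
  induction k with
  | zero => simpa using SimpleGraph.Reachable.refl (G := cayleyGraph n (stdS n)) (r 0)
  | succ k ih =>
    refine ih.trans (SimpleGraph.Adj.reachable ?_)
    refine (adj_rr hn).mpr (Or.inr ?_)
    push_cast
    ring

lemma cay_conn (hn : 3 ≤ n) : (cayleyGraph n (stdS n)).Connected := by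
  haveI : NeZero n := ⟨by omega⟩
  have hr : ∀ i : ZMod n, (cayleyGraph n (stdS n)).Reachable (r 0) (r i) := by
    intro i
    obtain ⟨k, hk⟩ := ZMod.natCast_rightInverse.surjective i
    rw [← hk]
    exact reach_r hn k
  have hall : ∀ x : DihedralGroup n, (cayleyGraph n (stdS n)).Reachable (r 0) x := by
    rintro (i | j)
    · exact hr i
    · refine (hr j).trans (SimpleGraph.Adj.reachable ?_)
      refine (adj_rsr).mpr (Or.inr ?_)
      ring
  exact ⟨fun x y => (hall x).symm.trans (hall y)⟩

end
section
variable {n : ℕ}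

/-- The blow-up equivalence. -/
def blowup (n : ℕ) : DihedralGroup n ≃ ZMod n × Fin 2 where
  toFun x := match x with
    | DihedralGroup.r i => (i, 0)
    | DihedralGroup.sr j => (j + 1, 1)
  invFun p := if p.2 = 0 then DihedralGroup.r p.1 else DihedralGroup.sr (p.1 - 1)
  left_inv := by
    rintro (i | j) <;> simp
  right_inv := by
    rintro ⟨i, s⟩
    fin_cases s <;> simp

lemma cycle_iso (hn : 3 ≤ n) : Nonempty (quotientGraph n ≃g SimpleGraph.cycleGraph n) := by
  obtain ⟨m, rfl⟩ : ∃ m, n = m + 3 := ⟨n - 3, by omega⟩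
  refine ⟨⟨Equiv.refl _, ?_⟩⟩
  intro i j
  show (SimpleGraph.cycleGraph (m + 3)).Adj i j ↔ _
  rw [quot_adj hn]
  exact SimpleGraph.cycleGraph_adj (n := m + 1)

lemma lex_iso (hn : 3 ≤ n) : Nonempty (cayleyGraph n (stdS n) ≃g
    (quotientGraph n).comap (Prod.fst : ZMod n × Fin 2 → ZMod n)) := by
  refine ⟨⟨blowup n, ?_⟩⟩
  intro x y
  rw [SimpleGraph.comap_adj]
  rcases x with i | i <;> rcases y with j | j
  · show (quotientGraph n).Adj i j ↔ _
    rw [quot_adj hn, adj_rr hn]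
  · show (quotientGraph n).Adj i (j + 1) ↔ _
    rw [quot_adj hn, adj_rsr]
  · show (quotientGraph n).Adj (i + 1) j ↔ _
    rw [quot_adj hn, adj_srr, or_comm]
  · show (quotientGraph n).Adj (i + 1) (j + 1) ↔ _
    rw [quot_adj hn, adj_srsr hn, add_sub_add_right_eq_sub, add_sub_add_right_eq_sub]

end

/-- Let `n ≥ 3` be odd and `S = {a, a⁻¹, a²b, b} ⊆ D_{2n}`. Then `Γ = Cay(D_{2n}, S)`
is connected; the quotient graph `Γ_B` with respect to the partition
`B = {⟨ab⟩aⁱ : 0 ≤ i ≤ n-1}` is a cycle of length `n`; and `Γ` is isomorphic to the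
lexicographic product `Γ_B[2K₁]` (each vertex of `Γ_B` blown up into two independent
vertices, which is the comap of `Γ_B` under the first projection). -/
theorem cayley_dihedral_lex_structure (n : ℕ) (hn : 3 ≤ n) (hodd : Odd n) :
    (cayleyGraph n (stdS n)).Connected ∧
    Nonempty (quotientGraph n ≃g SimpleGraph.cycleGraph n) ∧
    Nonempty (cayleyGraph n (stdS n) ≃g
      (quotientGraph n).comap (Prod.fst : ZMod n × Fin 2 → ZMod n)) := by
  exact ⟨cay_conn hn, cycle_iso hn, lex_iso hn⟩
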